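/- The integral from 0 to 1 with respect to x of y_3(n,k;λ;1,x) equals (1/(n+1)) Σ_{m=0}^{n} k^m y_1(n-m,k;λ). -/

import Mathlib

noncomputable def y1R (n k : ℕ) (lam : ℝ) : ℝ :=
  (k.factorial : ℝ)⁻¹ * ∑ j ∈ Finset.range (k + 1),
    (k.choose j : ℝ) * (j : ℝ) ^ n * lam ^ j

noncomputable def y3R (n k : ℕ) (lam a b : ℝ) : ℝ :=
  (k.factorial : ℝ)⁻¹ * ∑ j ∈ Finset.range (k + 1),
    (k.choose j : ℝ) * lam ^ j * (b * k + j * (a - b)) ^ n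

lemma key_integral (n : ℕ) (a c : ℝ) :
    ∫ x in (0:ℝ)..1, (a + x * c) ^ n =
      ((n : ℝ) + 1)⁻¹ * ∑ m ∈ Finset.range (n + 1), (a + c) ^ m * a ^ (n - m) := by
  have hn : ((n : ℝ) + 1) ≠ 0 := by positivity
  rcases eq_or_ne c 0 with rfl | hc
  · have hsum : ∑ m ∈ Finset.range (n + 1), a ^ m * a ^ (n - m) =
        ((n : ℝ) + 1) * a ^ n := by
      have : ∀ m ∈ Finset.range (n + 1), a ^ m * a ^ (n - m) = a ^ n := by
        intro m hm
        have hm' : m + (n - m) = n := by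
          have := Finset.mem_range.mp hm; omega
        rw [← pow_add, hm']
      rw [Finset.sum_congr rfl this, Finset.sum_const, Finset.card_range]
      ring
    simp only [mul_zero, add_zero, intervalIntegral.integral_const, smul_eq_mul, sub_zero,
      one_mul]
    rw [hsum, inv_mul_cancel_left₀ hn]
  · have hrw : ∀ x : ℝ, a + x * c = c * x + a := fun x => by ring
    simp_rw [hrw]
    rw [intervalIntegral.integral_comp_mul_add (fun y => y ^ n) hc a]
    rw [integral_pow, smul_eq_mul]
    have e1 : c * 1 + a = a + c := by ring
    have e2 : c * 0 + a = a := by ring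
    rw [e1, e2]
    have hgeo : (∑ m ∈ Finset.range (n + 1), (a + c) ^ m * a ^ (n - m)) * c =
        (a + c) ^ (n + 1) - a ^ (n + 1) := by
      have h := geom_sum₂_mul (a + c) a (n + 1)
      rw [add_sub_cancel_left, Nat.add_sub_cancel] at h
      convert h using 2
    rw [← hgeo]
    field_simp

theorem stmt11 (n k : ℕ) (lam : ℝ) :
    ∫ x in (0:ℝ)..1, y3R n k lam 1 x =
      ((n : ℝ) + 1)⁻¹ * ∑ m ∈ Finset.range (n + 1), (k : ℝ) ^ m * y1R (n - m) k lam := by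
  unfold y3R y1R
  have h1 : ∀ x : ℝ, (k.factorial : ℝ)⁻¹ * ∑ j ∈ Finset.range (k + 1),
      (k.choose j : ℝ) * lam ^ j * (x * k + j * (1 - x)) ^ n =
      ∑ j ∈ Finset.range (k + 1),
        (k.factorial : ℝ)⁻¹ * ((k.choose j : ℝ) * lam ^ j) * ((j : ℝ) + x * ((k : ℝ) - j)) ^ n := by
    intro x
    rw [Finset.mul_sum]
    refine Finset.sum_congr rfl fun j hj => ?_
    ring_nf
  simp_rw [h1]
  rw [intervalIntegral.integral_finset_sum]
  · have h2 : ∀ j ∈ Finset.range (k + 1),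
        (∫ x in (0:ℝ)..1, (k.factorial : ℝ)⁻¹ * ((k.choose j : ℝ) * lam ^ j) *
          ((j : ℝ) + x * ((k : ℝ) - j)) ^ n) =
        (k.factorial : ℝ)⁻¹ * ((k.choose j : ℝ) * lam ^ j) *
          (((n : ℝ) + 1)⁻¹ * ∑ m ∈ Finset.range (n + 1), (k : ℝ) ^ m * (j : ℝ) ^ (n - m)) := by
      intro j hj
      rw [intervalIntegral.integral_const_mul, key_integral]
      have e : (j : ℝ) + ((k : ℝ) - (j : ℝ)) = (k : ℝ) := by ring
      rw [e]
    rw [Finset.sum_congr rfl h2]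
    simp only [Finset.mul_sum]
    rw [Finset.sum_comm]
    refine Finset.sum_congr rfl fun m hm => Finset.sum_congr rfl fun j hj => ?_
    ring
  · intro j hj
    apply Continuous.intervalIntegrable
    continuity
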